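/- Fix constants α > 0, c > 0 and ε > 0 with ε < c. Suppose for each n, f_n is a function on {1,…,⌊n/2⌋} with f_n(k) ≥ c for all k, and that the family (f_n) satisfies: for every M > 0 there exist δ > 0 and n₁ such that f_n(u) ≥ M for all n ≥ n₁ and all 1 ≤ u ≤ δn. Then for every ε' > 0 there exists n₀ such that for every n ≥ n₀ and every graph G on n vertices that is an f_n-expander, with probability at least 1 − ε' under the deletion process with parameter α, the graph Ĝ is a (c − ε)-expander. -/

import Mathlib

open MeasureTheory Matrix

noncomputable def bern (p : ENNReal) : Measure Bool :=
  (PMF.bernoulli (min p 1).toNNReal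
    (by simpa using ENNReal.toNNReal_mono ENNReal.one_ne_top (min_le_right p 1))).toMeasure

noncomputable def delMeasure (n : ℕ) (α : ℝ) : Measure (Fin n → Bool) :=
  Measure.pi fun _ => bern (ENNReal.ofReal ((n : ℝ) ^ (-α)))

def survivors {n : ℕ} (ω : Fin n → Bool) : Set (Fin n) := {v | ω v = false}

def nbhd {V : Type*} (H : SimpleGraph V) (U : Set V) : Set V :=
  {v | v ∉ U ∧ ∃ u ∈ U, H.Adj u v}

def IsBetaExpander {V : Type*} (H : SimpleGraph V) (β : ℝ) : Prop :=
  ∀ U : Set V, U.Nonempty → (U.ncard : ℝ) ≤ (Nat.card V : ℝ) / 2 →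
    β * U.ncard ≤ ((nbhd H U).ncard : ℝ)


def IsFExpander {V : Type*} (H : SimpleGraph V) (f : ℕ → ℝ) : Prop :=
  ∀ U : Set V, U.Nonempty → (U.ncard : ℝ) ≤ (Nat.card V : ℝ) / 2 →
    f U.ncard * U.ncard ≤ ((nbhd H U).ncard : ℝ)

/-! ### Auxiliary lemmas -/

instance bern_prob (p : ENNReal) : IsProbabilityMeasure (bern p) :=
  PMF.toMeasure.isProbabilityMeasure _

instance delMeasure_prob (n : ℕ) (α : ℝ) : IsProbabilityMeasure (delMeasure n α) := by
  unfold delMeasure; infer_instance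

lemma bern_true (p : ENNReal) : bern p {true} = min p 1 := by
  rw [bern, PMF.toMeasure_apply_singleton _ _ (measurableSet_singleton _)]
  have hne : min p 1 ≠ ⊤ := ne_top_of_le_ne_top ENNReal.one_ne_top (min_le_right p 1)
  simp [PMF.bernoulli, ENNReal.coe_toNNReal hne]

lemma cyl_le (n : ℕ) (α : ℝ) (W : Finset (Fin n)) :
    delMeasure n α {ω | ∀ v ∈ W, ω v = true}
      ≤ ENNReal.ofReal ((n:ℝ)^(-α)) ^ W.card := by
  set p := ENNReal.ofReal ((n:ℝ)^(-α)) with hp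
  have h1 : {ω : Fin n → Bool | ∀ v ∈ W, ω v = true}
      = Set.univ.pi (fun v => if v ∈ W then ({true} : Set Bool) else Set.univ) := by
    ext ω
    simp only [Set.mem_setOf_eq, Set.mem_pi, Set.mem_univ, forall_true_left]
    constructor
    · intro h v; split <;> simp_all
    · intro h v hv; have := h v; simp [hv] at this; exact this
  rw [delMeasure, h1, Measure.pi_pi]
  have h2 : ∀ v : Fin n, bern p (if v ∈ W then ({true} : Set Bool) else Set.univ)
      = if v ∈ W then min p 1 else 1 := by
    intro v; split
    · exact bern_true p
    · exact measure_univ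
  calc ∏ v, bern p (if v ∈ W then ({true} : Set Bool) else Set.univ)
      = ∏ v, (if v ∈ W then min p 1 else 1) := by simp_rw [h2]
    _ = ∏ v ∈ W, min p 1 := by rw [Finset.prod_ite_mem, Finset.univ_inter]
    _ = (min p 1) ^ W.card := Finset.prod_const _
    _ ≤ p ^ W.card := pow_le_pow_left' (min_le_left _ _) _

lemma nbhd_induce_image {n : ℕ} (G : SimpleGraph (Fin n)) (S : Set (Fin n))
    (U' : Set ↥S) :
    Subtype.val '' (nbhd (G.induce S) U') = nbhd G (Subtype.val '' U') ∩ S := by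
  ext v
  constructor
  · rintro ⟨⟨v, hvS⟩, ⟨hvU, ⟨u, huU, hadj⟩⟩, rfl⟩
    refine ⟨⟨?_, ⟨u, ⟨u, huU, rfl⟩, hadj⟩⟩, hvS⟩
    rintro ⟨w, hwU, hwv⟩
    exact hvU (by rwa [show w = ⟨v, hvS⟩ from Subtype.ext hwv] at hwU)
  · rintro ⟨⟨hvU, ⟨u, ⟨u', hu'U, rfl⟩, hadj⟩⟩, hvS⟩
    exact ⟨⟨v, hvS⟩, ⟨fun h => hvU ⟨_, h, rfl⟩, ⟨u', hu'U, hadj⟩⟩, rfl⟩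

/-- Extraction of a bad witness pair (U, W) from failure of expansion. -/
lemma extract_bad {n : ℕ} (G : SimpleGraph (Fin n)) (c ε : ℝ)
    (ω : Fin n → Bool)
    (hbad : ¬ IsBetaExpander (G.induce (survivors ω)) (c - ε)) :
    ∃ U : Finset (Fin n), U.Nonempty ∧ (U.card : ℝ) ≤ (n : ℝ) / 2 ∧
      ∃ W ⊆ (Set.toFinite (nbhd G (↑U : Set (Fin n)))).toFinset,
        W.card = (Set.toFinite (nbhd G (↑U : Set (Fin n)))).toFinset.card
          - ⌊(c - ε) * U.card⌋₊ ∧ ∀ v ∈ W, ω v = true := by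
  rw [IsBetaExpander] at hbad
  push_neg at hbad
  set S := survivors ω with hS
  obtain ⟨U', hne, hhalf, hlt⟩ := hbad
  set U₀ : Set (Fin n) := Subtype.val '' U' with hU₀
  have hU₀fin : U₀.Finite := Set.toFinite _
  have hUS : U₀ ⊆ S := Subtype.coe_image_subset S U'
  have hcard : U₀.ncard = U'.ncard := Set.ncard_image_of_injective _ Subtype.val_injective
  have hcardF : hU₀fin.toFinset.card = U'.ncard := by
    rw [← Set.ncard_eq_toFinset_card _ hU₀fin, hcard]
  refine ⟨hU₀fin.toFinset, ?_, ?_, ?_⟩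
  · rw [Set.Finite.toFinset_nonempty]; exact hne.image _
  · have h1 : (Nat.card ↥S : ℝ) ≤ n := by
      rw [Nat.card_coe_set_eq]
      have := Set.ncard_le_ncard (Set.subset_univ S) Set.finite_univ
      rw [Set.ncard_univ, Nat.card_eq_fintype_card, Fintype.card_fin] at this
      exact_mod_cast this
    rw [hcardF]; linarith [hhalf]
  · have himg := nbhd_induce_image G S U'
    have hNS : (nbhd G U₀ ∩ S).ncard = (nbhd (G.induce S) U').ncard := by
      rw [← himg, Set.ncard_image_of_injective _ Subtype.val_injective]
    have hcoe : (↑(hU₀fin.toFinset) : Set (Fin n)) = U₀ := hU₀fin.coe_toFinset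
    rw [hcoe]
    set N : Set (Fin n) := nbhd G U₀ with hN
    have hNfin : N.Finite := Set.toFinite _
    have hsplit : (N ∩ S).ncard + (N \ S).ncard = N.ncard :=
      Set.ncard_inter_add_ncard_diff_eq_ncard N S hNfin
    have hk : (N ∩ S).ncard ≤ ⌊(c - ε) * (hU₀fin.toFinset.card : ℝ)⌋₊ := by
      apply Nat.le_floor
      rw [hNS, hcardF]
      exact le_of_lt hlt
    have hge : N.ncard - ⌊(c - ε) * (hU₀fin.toFinset.card : ℝ)⌋₊ ≤ (N \ S).ncard := by
      omega
    have hcards : (Set.toFinite N).toFinset.card = N.ncard :=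
      (Set.ncard_eq_toFinset_card _ _).symm
    obtain ⟨W, hWsub, hWcard⟩ := Finset.exists_subset_card_eq
      (show N.ncard - ⌊(c - ε) * (hU₀fin.toFinset.card : ℝ)⌋₊
        ≤ ((N \ S).toFinite.toFinset).card by
          rw [← Set.ncard_eq_toFinset_card _ (N \ S).toFinite]; exact hge)
    refine ⟨W, ?_, ?_, ?_⟩
    · refine hWsub.trans ?_
      intro v hv
      simp only [Set.Finite.mem_toFinset] at hv ⊢
      exact hv.1
    · rw [hWcard, hcards]
    · intro v hv
      have := hWsub hv
      simp only [Set.Finite.mem_toFinset] at this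
      have hvS : v ∉ S := this.2
      simpa [hS, survivors] using hvS

lemma choose_le_two_pow (N t : ℕ) : N.choose t ≤ 2 ^ N := by
  rcases le_or_gt t N with h | h
  · calc N.choose t ≤ ∑ m ∈ Finset.range (N + 1), N.choose m :=
        Finset.single_le_sum (fun i _ => Nat.zero_le _) (Finset.mem_range.mpr (by omega))
    _ = 2 ^ N := Nat.sum_range_choose N
  · simp [Nat.choose_eq_zero_of_lt h]

open Filter in
lemma evlarge (a b : ℝ) (ha : 0 < a) (hb : 0 < b) :
    ∃ n₂ : ℕ, ∀ n : ℕ, n₂ ≤ n → (4 : ℝ) ^ n * (n : ℝ) ^ (-(a * n)) ≤ b := by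
  have h8 : Tendsto (fun n : ℕ => (n : ℝ) ^ a) atTop atTop :=
    (tendsto_rpow_atTop ha).comp tendsto_natCast_atTop_atTop
  have h2 : Tendsto (fun n : ℕ => ((1:ℝ)/2) ^ n) atTop (nhds 0) :=
    tendsto_pow_atTop_nhds_zero_of_lt_one (by norm_num) (by norm_num)
  have hev : ∀ᶠ n : ℕ in atTop,
      (8 : ℝ) ≤ (n : ℝ) ^ a ∧ ((1:ℝ)/2) ^ n ≤ b ∧ 1 ≤ n := by
    filter_upwards [h8.eventually_ge_atTop 8,
      h2.eventually (ge_mem_nhds hb), eventually_ge_atTop 1] with n h1 h2' h3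
    exact ⟨h1, h2', h3⟩
  obtain ⟨n₂, hn₂⟩ := eventually_atTop.mp hev
  refine ⟨n₂, fun n hn => ?_⟩
  obtain ⟨h8n, hbn, h1n⟩ := hn₂ n hn
  have hnpos : (0:ℝ) < n := by exact_mod_cast h1n
  have hpow : (n : ℝ) ^ (a * n) = ((n:ℝ) ^ a) ^ n := by
    rw [Real.rpow_mul (le_of_lt hnpos), Real.rpow_natCast]
  have hpos : (0:ℝ) < (n:ℝ) ^ (a * n) := Real.rpow_pos_of_pos hnpos _
  have h8pow : (8:ℝ) ^ n ≤ (n : ℝ) ^ (a * n) := by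
    rw [hpow]; exact pow_le_pow_left₀ (by norm_num) h8n n
  calc (4 : ℝ) ^ n * (n : ℝ) ^ (-(a * n))
      = (4 : ℝ) ^ n / (n : ℝ) ^ (a * n) := by
        rw [Real.rpow_neg (le_of_lt hnpos), div_eq_mul_inv]
    _ ≤ (4 : ℝ) ^ n / (8 : ℝ) ^ n := by
        apply div_le_div_of_nonneg_left (by positivity) (by positivity) h8pow
    _ = ((1:ℝ)/2) ^ n := by rw [← div_pow]; norm_num
    _ ≤ b := hbn

set_option maxHeartbeats 2000000 in
theorem unbounded_expansion_deletion
    (α c ε : ℝ) (hα : 0 < α) (hc : 0 < c) (hε : 0 < ε) (hεc : ε < c)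
    (f : ℕ → ℕ → ℝ)
    (hf : ∀ n k : ℕ, 1 ≤ k → (k : ℝ) ≤ (n : ℝ) / 2 → c ≤ f n k)
    (hgrow : ∀ M : ℝ, 0 < M → ∃ δ : ℝ, 0 < δ ∧ ∃ n₁ : ℕ, ∀ n : ℕ, n₁ ≤ n →
      ∀ u : ℕ, 1 ≤ u → (u : ℝ) ≤ δ * (n : ℝ) → M ≤ f n u) :
    ∀ ε' : ℝ, 0 < ε' → ∃ n₀ : ℕ, ∀ n : ℕ, n₀ ≤ n →
      ∀ G : SimpleGraph (Fin n),
        IsFExpander G (f n) →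
        1 - ENNReal.ofReal ε' ≤ delMeasure n α
          {ω : Fin n → Bool | IsBetaExpander (G.induce (survivors ω)) (c - ε)} := by
  classical
  intro ε' hε'
  -- choice of constants
  set B : ℕ := ⌈(c + 3) / α⌉₊ with hBdef
  have hB : c + 3 ≤ α * B := by
    have h1 : (c + 3) / α ≤ (B : ℝ) := Nat.le_ceil _
    rw [div_le_iff₀ hα] at h1
    linarith [h1]
  have hM : (0:ℝ) < c + B := by positivity
  obtain ⟨δ, hδ, n₁, hδM⟩ := hgrow (c + (B:ℝ)) hM
  obtain ⟨n₂, hn₂⟩ := evlarge (α * ε * δ) (ε'/2) (by positivity) (by positivity)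
  refine ⟨max (max n₁ n₂) (max ⌈(2:ℝ)/ε'⌉₊ 2), fun n hn G hG => ?_⟩
  have hn₁ : n₁ ≤ n := le_trans ((le_max_left _ _).trans (le_max_left _ _)) hn
  have hn₂' : n₂ ≤ n := le_trans ((le_max_right _ _).trans (le_max_left _ _)) hn
  have hn₃ : ⌈(2:ℝ)/ε'⌉₊ ≤ n := le_trans ((le_max_left _ _).trans (le_max_right _ _)) hn
  have hn2 : 2 ≤ n := le_trans ((le_max_right _ _).trans (le_max_right _ _)) hn
  have hn1R : (1:ℝ) ≤ n := by exact_mod_cast le_trans (by norm_num) hn2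
  have hnposR : (0:ℝ) < n := by linarith
  -- notation
  set q : ℝ := (n:ℝ) ^ (-α) with hqdef
  have hq0 : 0 ≤ q := Real.rpow_nonneg (le_of_lt hnposR) _
  have hq1 : q ≤ 1 := Real.rpow_le_one_of_one_le_of_nonpos hn1R (by linarith)
  set p : ENNReal := ENNReal.ofReal q with hpdef
  set NF : Finset (Fin n) → Finset (Fin n) :=
    fun U => (Set.toFinite (nbhd G (↑U : Set (Fin n)))).toFinset with hNFdef
  set tt : Finset (Fin n) → ℕ :=
    fun U => (NF U).card - ⌊(c - ε) * (U.card : ℝ)⌋₊ with httdef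
  set 𝒰 : Finset (Finset (Fin n)) :=
    Finset.univ.powerset.filter
      (fun U => U.Nonempty ∧ (U.card:ℝ) ≤ (n:ℝ)/2) with h𝒰def
  -- basic facts for U ∈ 𝒰
  have hNFn : ∀ U : Finset (Fin n), (NF U).card ≤ n := by
    intro U
    calc (NF U).card ≤ Finset.univ.card := Finset.card_le_univ _
      _ = n := by simp
  have key : ∀ U ∈ 𝒰, 1 ≤ U.card ∧ (U.card:ℝ) ≤ (n:ℝ)/2 ∧
      f n U.card * U.card ≤ ((NF U).card : ℝ) ∧
      c * U.card ≤ ((NF U).card : ℝ) ∧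
      ⌊(c - ε) * (U.card : ℝ)⌋₊ < (NF U).card ∧
      ((tt U : ℝ) = ((NF U).card : ℝ) - (⌊(c - ε) * (U.card : ℝ)⌋₊ : ℝ)) ∧
      ε * U.card ≤ (tt U : ℝ) := by
    intro U hU
    rw [h𝒰def, Finset.mem_filter] at hU
    obtain ⟨-, hne, hhalf⟩ := hU
    have hu1 : 1 ≤ U.card := hne.card_pos
    have hu1R : (1:ℝ) ≤ U.card := by exact_mod_cast hu1
    have hexp : f n U.card * U.card ≤ ((NF U).card : ℝ) := by
      have h := hG (↑U : Set (Fin n)) (by rwa [Finset.coe_nonempty])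
        (by rw [Set.ncard_coe_finset]
            simpa [Nat.card_eq_fintype_card] using hhalf)
      rw [Set.ncard_coe_finset] at h
      rwa [hNFdef, ← Set.ncard_eq_toFinset_card _ (Set.toFinite _)]
    have hfc : c ≤ f n U.card := hf n U.card hu1 (by exact_mod_cast hhalf)
    have hcu : c * U.card ≤ ((NF U).card : ℝ) := by
      calc c * U.card ≤ f n U.card * U.card := by
            apply mul_le_mul_of_nonneg_right hfc; positivity
        _ ≤ _ := hexp
    have hkle : ((⌊(c - ε) * (U.card : ℝ)⌋₊ : ℝ)) ≤ (c - ε) * U.card :=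
      Nat.floor_le (by nlinarith)
    have hkN : ⌊(c - ε) * (U.card : ℝ)⌋₊ < (NF U).card := by
      have : ((⌊(c - ε) * (U.card : ℝ)⌋₊ : ℝ)) < ((NF U).card : ℝ) := by nlinarith
      exact_mod_cast this
    have httR : (tt U : ℝ) = ((NF U).card : ℝ) - (⌊(c - ε) * (U.card : ℝ)⌋₊ : ℝ) := by
      rw [httdef]; push_cast [Nat.cast_sub (le_of_lt hkN)]; ring
    refine ⟨hu1, hhalf, hexp, hcu, hkN, httR, ?_⟩
    rw [httR]; nlinarith
  -- the bad event is covered by cylinder events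
  set bad : Set (Fin n → Bool) :=
    {ω | ¬ IsBetaExpander (G.induce (survivors ω)) (c - ε)} with hbaddef
  have hcover : bad ⊆ ⋃ U ∈ 𝒰, ⋃ W ∈ Finset.powersetCard (tt U) (NF U),
      {ω : Fin n → Bool | ∀ v ∈ W, ω v = true} := by
    intro ω hω
    obtain ⟨U, hUne, hUhalf, W, hWsub, hWcard, hWtrue⟩ := extract_bad G c ε ω hω
    simp only [Set.mem_iUnion]
    refine ⟨U, ?_, W, ?_, hWtrue⟩
    · rw [h𝒰def, Finset.mem_filter]
      exact ⟨Finset.mem_powerset.mpr (Finset.subset_univ _), hUne, hUhalf⟩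
    · rw [Finset.mem_powersetCard]
      exact ⟨hWsub, hWcard⟩
  -- union bound
  have hbound1 : delMeasure n α bad
      ≤ ∑ U ∈ 𝒰, ((NF U).card.choose (tt U) : ENNReal) * p ^ (tt U) := by
    calc delMeasure n α bad
        ≤ delMeasure n α (⋃ U ∈ 𝒰, ⋃ W ∈ Finset.powersetCard (tt U) (NF U),
            {ω : Fin n → Bool | ∀ v ∈ W, ω v = true}) := measure_mono hcover
      _ ≤ ∑ U ∈ 𝒰, delMeasure n α (⋃ W ∈ Finset.powersetCard (tt U) (NF U),
            {ω : Fin n → Bool | ∀ v ∈ W, ω v = true}) := measure_biUnion_finset_le _ _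
      _ ≤ ∑ U ∈ 𝒰, ∑ W ∈ Finset.powersetCard (tt U) (NF U),
            delMeasure n α {ω : Fin n → Bool | ∀ v ∈ W, ω v = true} :=
          Finset.sum_le_sum (fun U _ => measure_biUnion_finset_le _ _)
      _ ≤ ∑ U ∈ 𝒰, ∑ W ∈ Finset.powersetCard (tt U) (NF U), p ^ (tt U) := by
          apply Finset.sum_le_sum
          intro U _
          apply Finset.sum_le_sum
          intro W hW
          have hWc : W.card = tt U := (Finset.mem_powersetCard.mp hW).2
          rw [← hWc]
          exact cyl_le n α W
      _ = ∑ U ∈ 𝒰, ((NF U).card.choose (tt U) : ENNReal) * p ^ (tt U) := by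
          apply Finset.sum_congr rfl
          intro U _
          rw [Finset.sum_const, Finset.card_powersetCard, nsmul_eq_mul]
  -- pass to real terms
  have hterm : ∀ U : Finset (Fin n),
      ((NF U).card.choose (tt U) : ENNReal) * p ^ (tt U)
        = ENNReal.ofReal (((NF U).card.choose (tt U) : ℝ) * q ^ (tt U)) := by
    intro U
    rw [ENNReal.ofReal_mul (by positivity), ENNReal.ofReal_pow hq0,
      ENNReal.ofReal_natCast]
  have hbound2 : delMeasure n α bad
      ≤ ENNReal.ofReal (∑ U ∈ 𝒰, ((NF U).card.choose (tt U) : ℝ) * q ^ (tt U)) := by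
    rw [ENNReal.ofReal_sum_of_nonneg (fun U _ => by positivity)]
    simp_rw [← hterm]
    exact hbound1
  -- the real sum estimate
  have hrealsum : ∑ U ∈ 𝒰, ((NF U).card.choose (tt U) : ℝ) * q ^ (tt U) ≤ ε' := by
    set m : ℕ := ⌈ε * δ * (n:ℝ)⌉₊ with hmdef
    set g : Finset (Fin n) → ℝ :=
      fun U => ((NF U).card.choose (tt U) : ℝ) * q ^ (tt U) with hgdef
    have hsplit := Finset.sum_filter_add_sum_filter_not 𝒰
      (fun U => (U.card:ℝ) ≤ δ * n) g
    -- small sets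
    have hsmallpt : ∀ U ∈ 𝒰.filter (fun U => (U.card:ℝ) ≤ δ * n),
        g U ≤ (n:ℝ) ^ (-(3:ℝ) * U.card) := by
      intro U hU
      rw [Finset.mem_filter] at hU
      obtain ⟨hU𝒰, hUδ⟩ := hU
      obtain ⟨hu1, hhalf, hexp, hcu, hkN, httR, htε⟩ := key U hU𝒰
      have hu0R : (0:ℝ) ≤ U.card := by positivity
      have hu1R : (1:ℝ) ≤ U.card := by exact_mod_cast hu1
      set k : ℕ := ⌊(c - ε) * (U.card : ℝ)⌋₊ with hkdef
      have hchoose : ((NF U).card.choose (tt U) : ℝ) ≤ (n:ℝ) ^ (k:ℕ) := by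
        have h1 : (NF U).card.choose (tt U) = (NF U).card.choose k :=
          Nat.choose_symm (le_of_lt hkN)
        rw [h1]
        exact_mod_cast le_trans (Nat.choose_le_pow _ _) (Nat.pow_le_pow_left (hNFn U) k)
      have hfMu : (c + (B:ℝ)) ≤ f n U.card := hδM n hn₁ U.card hu1 hUδ
      have hMu : (c + (B:ℝ)) * U.card ≤ ((NF U).card : ℝ) := by nlinarith
      have hkle : ((k:ℕ):ℝ) ≤ (c - ε) * U.card := Nat.floor_le (by nlinarith)
      have hBu : (B * U.card : ℕ) ≤ tt U := by
        have h2 : ((B * U.card : ℕ):ℝ) ≤ (tt U : ℝ) := by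
          push_cast
          rw [httR]
          nlinarith
        exact_mod_cast h2
      have hqpow : q ^ (tt U) ≤ q ^ (B * U.card) := pow_le_pow_of_le_one hq0 hq1 hBu
      have hαBu : α * ((B * U.card : ℕ) : ℝ) ≥ (c + 3) * U.card := by
        push_cast
        nlinarith
      calc g U ≤ (n:ℝ)^(k:ℕ) * q ^ (B * U.card) :=
            mul_le_mul hchoose hqpow (by positivity) (by positivity)
        _ = (n:ℝ) ^ ((k:ℕ):ℝ) * (n:ℝ) ^ (-α * ((B * U.card : ℕ):ℝ)) := by
            rw [Real.rpow_natCast]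
            congr 1
            rw [hqdef, ← Real.rpow_natCast ((n:ℝ)^(-α)) (B * U.card),
              ← Real.rpow_mul (le_of_lt hnposR)]
        _ = (n:ℝ) ^ (((k:ℕ):ℝ) + (-α * ((B * U.card : ℕ):ℝ))) :=
            (Real.rpow_add hnposR _ _).symm
        _ ≤ (n:ℝ) ^ (-(3:ℝ) * U.card) := by
            apply Real.rpow_le_rpow_of_exponent_le hn1R
            nlinarith
    have himage : ∀ b ∈ (𝒰.filter (fun U => (U.card:ℝ) ≤ δ * n)).image Finset.card,
        1 ≤ b ∧ b ≤ n := by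
      intro b hb
      rw [Finset.mem_image] at hb
      obtain ⟨U, hU, rfl⟩ := hb
      rw [Finset.mem_filter] at hU
      obtain ⟨hU𝒰, -⟩ := hU
      obtain ⟨hu1, -, -, -, -, -, -⟩ := key U hU𝒰
      refine ⟨hu1, ?_⟩
      calc U.card ≤ Finset.univ.card := Finset.card_le_univ _
        _ = n := by simp
    have hcount : ∀ b : ℕ,
        ((𝒰.filter (fun U => (U.card:ℝ) ≤ δ * n)).filter
          (fun U => U.card = b)).card ≤ n ^ b := by
      intro b
      calc ((𝒰.filter (fun U => (U.card:ℝ) ≤ δ * n)).filter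
              (fun U => U.card = b)).card
          ≤ (Finset.powersetCard b (Finset.univ : Finset (Fin n))).card := by
            apply Finset.card_le_card
            intro U hU
            rw [Finset.mem_filter] at hU
            rw [Finset.mem_powersetCard]
            exact ⟨Finset.subset_univ _, hU.2⟩
        _ = n.choose b := by rw [Finset.card_powersetCard]; simp
        _ ≤ n ^ b := Nat.choose_le_pow _ _
    have hsmall : ∑ U ∈ 𝒰.filter (fun U => (U.card:ℝ) ≤ δ * n), g U ≤ ε' / 2 := by
      have h1 : ∑ U ∈ 𝒰.filter (fun U => (U.card:ℝ) ≤ δ * n), g U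
          ≤ ∑ U ∈ 𝒰.filter (fun U => (U.card:ℝ) ≤ δ * n),
              (fun b : ℕ => (n:ℝ) ^ (-(3:ℝ) * b)) U.card :=
        Finset.sum_le_sum hsmallpt
      rw [Finset.sum_comp (fun b : ℕ => (n:ℝ) ^ (-(3:ℝ) * b)) Finset.card] at h1
      have h2 : ∀ b ∈ (𝒰.filter (fun U => (U.card:ℝ) ≤ δ * n)).image Finset.card,
          ((𝒰.filter (fun U => (U.card:ℝ) ≤ δ * n)).filter
            (fun U => U.card = b)).card • (n:ℝ) ^ (-(3:ℝ) * b)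
          ≤ (n:ℝ) ^ (-(2:ℝ)) := by
        intro b hb
        obtain ⟨hb1, hbn⟩ := himage b hb
        have hb1R : (1:ℝ) ≤ b := by exact_mod_cast hb1
        rw [nsmul_eq_mul]
        have hcR : (((𝒰.filter (fun U => (U.card:ℝ) ≤ δ * n)).filter
            (fun U => U.card = b)).card : ℝ) ≤ (n:ℝ) ^ (b:ℕ) := by
          exact_mod_cast hcount b
        calc (((𝒰.filter (fun U => (U.card:ℝ) ≤ δ * n)).filter
                (fun U => U.card = b)).card : ℝ) * (n:ℝ) ^ (-(3:ℝ) * b)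
            ≤ (n:ℝ) ^ (b:ℕ) * (n:ℝ) ^ (-(3:ℝ) * b) := by
              apply mul_le_mul_of_nonneg_right hcR (Real.rpow_nonneg (le_of_lt hnposR) _)
          _ = (n:ℝ) ^ ((b:ℝ) + (-(3:ℝ) * b)) := by
              rw [← Real.rpow_natCast (n:ℝ) b, ← Real.rpow_add hnposR]
          _ ≤ (n:ℝ) ^ (-(2:ℝ)) := by
              apply Real.rpow_le_rpow_of_exponent_le hn1R
              nlinarith
      have h3 : ∑ b ∈ (𝒰.filter (fun U => (U.card:ℝ) ≤ δ * n)).image Finset.card,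
          ((𝒰.filter (fun U => (U.card:ℝ) ≤ δ * n)).filter
            (fun U => U.card = b)).card • (n:ℝ) ^ (-(3:ℝ) * b)
          ≤ ((𝒰.filter (fun U => (U.card:ℝ) ≤ δ * n)).image Finset.card).card
              • (n:ℝ) ^ (-(2:ℝ)) :=
        Finset.sum_le_card_nsmul _ _ _ h2
      have h4 : ((𝒰.filter (fun U => (U.card:ℝ) ≤ δ * n)).image Finset.card).card ≤ n := by
        calc ((𝒰.filter (fun U => (U.card:ℝ) ≤ δ * n)).image Finset.card).card
            ≤ (Finset.Icc 1 n).card := by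
              apply Finset.card_le_card
              intro b hb
              obtain ⟨hb1, hbn⟩ := himage b hb
              rw [Finset.mem_Icc]; exact ⟨hb1, hbn⟩
          _ = n := by rw [Nat.card_Icc]; omega
      have h5 : ((𝒰.filter (fun U => (U.card:ℝ) ≤ δ * n)).image Finset.card).card
            • (n:ℝ) ^ (-(2:ℝ)) ≤ (n:ℝ) * (n:ℝ) ^ (-(2:ℝ)) := by
        rw [nsmul_eq_mul]
        apply mul_le_mul_of_nonneg_right _ (Real.rpow_nonneg (le_of_lt hnposR) _)
        exact_mod_cast h4
      have h6 : (n:ℝ) * (n:ℝ) ^ (-(2:ℝ)) = (n:ℝ)⁻¹ := by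
        rw [show (n:ℝ) * (n:ℝ) ^ (-(2:ℝ)) = (n:ℝ) ^ (1:ℝ) * (n:ℝ) ^ (-(2:ℝ)) by
          rw [Real.rpow_one], ← Real.rpow_add hnposR, ← Real.rpow_neg_one (n:ℝ)]
        norm_num
      have h7 : (n:ℝ)⁻¹ ≤ ε' / 2 := by
        have : (2:ℝ) / ε' ≤ n := by
          have := Nat.ceil_le.mp hn₃
          exact_mod_cast this
        rw [inv_eq_one_div, div_le_div_iff₀ hnposR (by norm_num : (0:ℝ) < 2)]
        rw [div_le_iff₀ hε'] at this
        nlinarith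
      linarith
    -- large sets
    have hlargept : ∀ U ∈ 𝒰.filter (fun U => ¬ ((U.card:ℝ) ≤ δ * n)),
        g U ≤ (2:ℝ)^n * q ^ m := by
      intro U hU
      rw [Finset.mem_filter] at hU
      obtain ⟨hU𝒰, hUδ⟩ := hU
      push_neg at hUδ
      obtain ⟨hu1, hhalf, hexp, hcu, hkN, httR, htε⟩ := key U hU𝒰
      have hmt : m ≤ tt U := by
        rw [hmdef, Nat.ceil_le]
        calc ε * δ * n ≤ ε * U.card := by nlinarith
          _ ≤ tt U := htε
      have hqpow : q ^ (tt U) ≤ q ^ m := pow_le_pow_of_le_one hq0 hq1 hmt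
      have hch : ((NF U).card.choose (tt U) : ℝ) ≤ (2:ℝ)^n := by
        exact_mod_cast le_trans (choose_le_two_pow _ _)
          (Nat.pow_le_pow_right (by norm_num) (hNFn U))
      exact mul_le_mul hch hqpow (by positivity) (by positivity)
    have hlarge : ∑ U ∈ 𝒰.filter (fun U => ¬ ((U.card:ℝ) ≤ δ * n)), g U ≤ ε' / 2 := by
      have h1 : ∑ U ∈ 𝒰.filter (fun U => ¬ ((U.card:ℝ) ≤ δ * n)), g U
          ≤ (𝒰.filter (fun U => ¬ ((U.card:ℝ) ≤ δ * n))).card • ((2:ℝ)^n * q ^ m) :=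
        Finset.sum_le_card_nsmul _ _ _ hlargept
      have hcard : (𝒰.filter (fun U => ¬ ((U.card:ℝ) ≤ δ * n))).card ≤ 2 ^ n := by
        calc (𝒰.filter (fun U => ¬ ((U.card:ℝ) ≤ δ * n))).card
            ≤ (Finset.univ : Finset (Fin n)).powerset.card := by
              apply Finset.card_le_card
              intro U hU
              exact Finset.mem_powerset.mpr (Finset.subset_univ _)
          _ = 2 ^ n := by rw [Finset.card_powerset]; simp
      have h2 : (𝒰.filter (fun U => ¬ ((U.card:ℝ) ≤ δ * n))).card • ((2:ℝ)^n * q ^ m)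
          ≤ (2:ℝ)^n * ((2:ℝ)^n * q ^ m) := by
        rw [nsmul_eq_mul]
        apply mul_le_mul_of_nonneg_right _ (by positivity)
        exact_mod_cast hcard
      have hqm : q ^ m ≤ (n:ℝ) ^ (-(α * ε * δ * n)) := by
        have hqm1 : q ^ m = (n:ℝ) ^ (-α * (m:ℝ)) := by
          rw [hqdef, ← Real.rpow_natCast ((n:ℝ)^(-α)) m,
            ← Real.rpow_mul (le_of_lt hnposR)]
        rw [hqm1]
        apply Real.rpow_le_rpow_of_exponent_le hn1R
        have hmge : ε * δ * (n:ℝ) ≤ (m:ℝ) := Nat.le_ceil _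
        nlinarith
      have h3 : (2:ℝ)^n * ((2:ℝ)^n * q ^ m) ≤ (4:ℝ)^n * (n:ℝ) ^ (-(α * ε * δ * n)) := by
        have h4 : (2:ℝ)^n * (2:ℝ)^n = (4:ℝ)^n := by
          rw [← mul_pow]; norm_num
        calc (2:ℝ)^n * ((2:ℝ)^n * q ^ m) = (4:ℝ)^n * q ^ m := by rw [← mul_assoc, h4]
          _ ≤ (4:ℝ)^n * (n:ℝ) ^ (-(α * ε * δ * n)) := by
              apply mul_le_mul_of_nonneg_left hqm (by positivity)
      have h5 := hn₂ n hn₂'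
      linarith
    linarith
  have hbadle : delMeasure n α bad ≤ ENNReal.ofReal ε' :=
    hbound2.trans (ENNReal.ofReal_le_ofReal hrealsum)
  -- conclude
  rw [tsub_le_iff_right]
  have huniv : (1 : ENNReal) = delMeasure n α Set.univ := (measure_univ).symm
  calc (1 : ENNReal) = delMeasure n α Set.univ := huniv
    _ ≤ delMeasure n α ({ω : Fin n → Bool |
          IsBetaExpander (G.induce (survivors ω)) (c - ε)} ∪ bad) := by
        apply measure_mono
        intro ω _
        by_cases h : IsBetaExpander (G.induce (survivors ω)) (c - ε)
        · exact Or.inl h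
        · exact Or.inr h
    _ ≤ delMeasure n α {ω : Fin n → Bool |
          IsBetaExpander (G.induce (survivors ω)) (c - ε)} + delMeasure n α bad :=
        measure_union_le _ _
    _ ≤ _ := add_le_add_right hbadle _
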